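/- arXiv:1001.1827 — 4 statements merged into one kernel-verified Lean document; each statement's English description precedes it below -/
import Mathlib

section
/- Let probability reproducibility hold: for every unit vector φ ∈ H_S and every k ∈ K, Σ_{l∈J_k} |⟨φ_{kl}, φ⟩|² = ‖(1 ⊗ P_k)(U(φ ⊗ ψ))‖², where P_k is the orthogonal projection of H_A onto the span of ψ_k. Then there exists a family {χ_{kl} : k ∈ K, l ∈ J_k} of unit vectors in H_S with ⟨χ_{kl}, χ_{kj}⟩ = δ_{lj} for each k and all l, j ∈ J_k, such that U(φ_{kl} ⊗ ψ) = χ_{kl} ⊗ ψ_k for all k ∈ K and l ∈ J_k. -/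
/- STATEMENT 0 (Beltrametti–Cassinelli–Lahti theorem).
`HT` plays the role of the completed Hilbert tensor product `H_S ⊗ H_A`:
it is axiomatized by a bilinear map `tp` whose inner products factorize and
whose pure tensors span a dense subspace.  `Q k` is the operator `1 ⊗ P_k`,
where `P_k` is the orthogonal projection of `H_A` onto the span of `ψ_k`. -/

open scoped InnerProductSpace

theorem probability_reproducibility_implies_measurement_coupling
    {HS HA HT : Type*}
    [NormedAddCommGroup HS] [InnerProductSpace ℂ HS] [CompleteSpace HS]
    [NormedAddCommGroup HA] [InnerProductSpace ℂ HA] [CompleteSpace HA]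
    [NormedAddCommGroup HT] [InnerProductSpace ℂ HT] [CompleteSpace HT]
    {K : Type*} {J : K → Type*} [Countable K] [∀ k, Countable (J k)]
    -- orthonormal basis {φ_{kl}} of H_S
    (B : HilbertBasis (Σ k : K, J k) ℂ HS)
    -- orthonormal family {ψ_k} in H_A
    (ψvec : K → HA) (hψvec : Orthonormal ℂ ψvec)
    -- unit vector ψ ∈ H_A
    (ψ0 : HA) (hψ0 : ‖ψ0‖ = 1)
    -- the Hilbert tensor product structure on HT
    (tp : HS →ₗ[ℂ] HA →ₗ[ℂ] HT)
    (htp : ∀ (x x' : HS) (y y' : HA),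
      ⟪tp x y, tp x' y'⟫_ℂ = ⟪x, x'⟫_ℂ * ⟪y, y'⟫_ℂ)
    (hdense : Dense ((Submodule.span ℂ
      (Set.range fun p : HS × HA => tp p.1 p.2) : Submodule ℂ HT) : Set HT))
    -- a unitary operator U on HT
    (U : HT ≃ₗᵢ[ℂ] HT)
    -- Q k = 1 ⊗ P_k, P_k the orthogonal projection onto span ψ_k
    (Q : K → HT →L[ℂ] HT)
    (hQ : ∀ (k : K) (x : HS) (y : HA),
      Q k (tp x y) = tp x (⟪ψvec k, y⟫_ℂ • ψvec k))
    -- probability reproducibility condition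
    (hprob : ∀ φ : HS, ‖φ‖ = 1 → ∀ k : K,
      (∑' l : J k, ‖⟪(B ⟨k, l⟩ : HS), φ⟫_ℂ‖ ^ 2) = ‖Q k (U (tp φ ψ0))‖ ^ 2) :
    ∃ χ : (Σ k : K, J k) → HS,
      (∀ kl : Σ k : K, J k, ‖χ kl‖ = 1) ∧
      (∀ k : K, Orthonormal ℂ (fun l : J k => χ ⟨k, l⟩)) ∧
      (∀ kl : Σ k : K, J k, U (tp (B kl) ψ0) = tp (χ kl) (ψvec kl.1)) := by
  classical
  -- norm of a pure tensor
  have hnorm : ∀ (x : HS) (y : HA), ‖tp x y‖ = ‖x‖ * ‖y‖ := by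
    intro x y
    have h := htp x x y y
    rw [inner_self_eq_norm_sq_to_K, inner_self_eq_norm_sq_to_K,
      inner_self_eq_norm_sq_to_K] at h
    have h2 : ‖tp x y‖ ^ 2 = (‖x‖ * ‖y‖) ^ 2 := by
      have h3 : ‖tp x y‖ ^ 2 = ‖x‖ ^ 2 * ‖y‖ ^ 2 := by exact_mod_cast h
      rw [h3]; ring
    rw [← Real.sqrt_sq (norm_nonneg (tp x y)), h2,
      Real.sqrt_sq (mul_nonneg (norm_nonneg x) (norm_nonneg y))]
  have hψk : ∀ k : K, ⟪ψvec k, ψvec k⟫_ℂ = 1 := by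
    intro k
    rw [inner_self_eq_norm_sq_to_K, hψvec.1 k]
    norm_num
  -- self-adjointness of Q k
  have hsa1 : ∀ (k : K) (x : HS) (y : HA) (w : HT),
      ⟪Q k (tp x y), w⟫_ℂ = ⟪tp x y, Q k w⟫_ℂ := by
    intro k x y w
    have hfg : (innerSL ℂ (Q k (tp x y)) : HT →L[ℂ] ℂ)
        = (innerSL ℂ (tp x y)).comp (Q k) := by
      apply ContinuousLinearMap.ext_on hdense
      rintro _ ⟨⟨x', y'⟩, rfl⟩
      simp only [innerSL_apply_apply, ContinuousLinearMap.coe_comp',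
        Function.comp_apply, innerSL_apply_apply]
      rw [hQ, hQ, htp, htp, inner_smul_left, inner_smul_right, inner_conj_symm]
      ring
    calc ⟪Q k (tp x y), w⟫_ℂ = innerSL ℂ (Q k (tp x y)) w := rfl
      _ = ((innerSL ℂ (tp x y)).comp (Q k)) w := by rw [hfg]
      _ = ⟪tp x y, Q k w⟫_ℂ := rfl
  have hsa : ∀ (k : K) (u v : HT), ⟪Q k u, v⟫_ℂ = ⟪u, Q k v⟫_ℂ := by
    intro k u v
    have hfg : ((innerSL ℂ v).comp (Q k) : HT →L[ℂ] ℂ)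
        = innerSL ℂ (Q k v) := by
      apply ContinuousLinearMap.ext_on hdense
      rintro _ ⟨⟨x', y'⟩, rfl⟩
      simp only [innerSL_apply_apply, ContinuousLinearMap.coe_comp',
        Function.comp_apply, innerSL_apply_apply]
      have h := hsa1 k x' y' v
      calc ⟪v, Q k (tp x' y')⟫_ℂ
          = starRingEnd ℂ ⟪Q k (tp x' y'), v⟫_ℂ := (inner_conj_symm _ _).symm
        _ = starRingEnd ℂ ⟪tp x' y', Q k v⟫_ℂ := by rw [h]
        _ = ⟪Q k v, tp x' y'⟫_ℂ := inner_conj_symm _ _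
    have h2 : ⟪v, Q k u⟫_ℂ = ⟪Q k v, u⟫_ℂ := by
      calc ⟪v, Q k u⟫_ℂ = ((innerSL ℂ v).comp (Q k)) u := rfl
        _ = innerSL ℂ (Q k v) u := by rw [hfg]
        _ = ⟪Q k v, u⟫_ℂ := rfl
    calc ⟪Q k u, v⟫_ℂ = starRingEnd ℂ ⟪v, Q k u⟫_ℂ := (inner_conj_symm _ _).symm
      _ = starRingEnd ℂ ⟪Q k v, u⟫_ℂ := by rw [h2]
      _ = ⟪u, Q k v⟫_ℂ := inner_conj_symm _ _
  -- idempotency of Q k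
  have hid : ∀ (k : K) (v : HT), Q k (Q k v) = Q k v := by
    intro k v
    have hfg : (Q k).comp (Q k) = Q k := by
      apply ContinuousLinearMap.ext_on hdense
      rintro _ ⟨⟨x, y⟩, rfl⟩
      simp only [ContinuousLinearMap.coe_comp', Function.comp_apply]
      rw [hQ, hQ, inner_smul_right, hψk, mul_one]
    calc Q k (Q k v) = ((Q k).comp (Q k)) v := rfl
      _ = Q k v := by rw [hfg]
  -- key lemma: a fixed point of Q k is a pure tensor with ψvec k
  have hkey : ∀ (k : K) (v : HT), Q k v = v → ∃ χ : HS, v = tp χ (ψvec k) := by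
    intro k v hv
    set ψ := ψvec k with hψdef
    let L0 : HS →ₗ[ℂ] ℂ :=
      { toFun := fun x => ⟪v, tp x ψ⟫_ℂ
        map_add' := by
          intro a b
          simp only [map_add, LinearMap.add_apply, inner_add_right]
        map_smul' := by
          intro c a
          simp only [map_smul, LinearMap.smul_apply, inner_smul_right,
            RingHom.id_apply, smul_eq_mul] }
    have hL0bound : ∀ x : HS, ‖L0 x‖ ≤ ‖v‖ * ‖x‖ := by
      intro x
      calc ‖L0 x‖ = ‖⟪v, tp x ψ⟫_ℂ‖ := rfl
        _ ≤ ‖v‖ * ‖tp x ψ‖ := norm_inner_le_norm _ _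
        _ = ‖v‖ * (‖x‖ * ‖ψ‖) := by rw [hnorm]
        _ = ‖v‖ * (‖x‖ * 1) := by rw [hψvec.1 k]
        _ = ‖v‖ * ‖x‖ := by ring
    let L : HS →L[ℂ] ℂ := L0.mkContinuous ‖v‖ hL0bound
    let χ : HS := (InnerProductSpace.toDual ℂ HS).symm L
    have hχ : ∀ x : HS, ⟪χ, x⟫_ℂ = ⟪v, tp x ψ⟫_ℂ := by
      intro x
      exact InnerProductSpace.toDual_symm_apply
    refine ⟨χ, ?_⟩
    have hfg : (innerSL ℂ v : HT →L[ℂ] ℂ) = innerSL ℂ (tp χ ψ) := by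
      apply ContinuousLinearMap.ext_on hdense
      rintro _ ⟨⟨x, y⟩, rfl⟩
      simp only [innerSL_apply_apply, innerSL_apply_apply]
      have hsmul : tp x (⟪ψ, y⟫_ℂ • ψ) = ⟪ψ, y⟫_ℂ • tp x ψ := map_smul (tp x) _ _
      have h1 : ⟪tp x y, v⟫_ℂ
          = starRingEnd ℂ ⟪ψ, y⟫_ℂ * ⟪x, χ⟫_ℂ := by
        calc ⟪tp x y, v⟫_ℂ = ⟪tp x y, Q k v⟫_ℂ := by rw [hv]
          _ = ⟪Q k (tp x y), v⟫_ℂ := (hsa k _ _).symm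
          _ = ⟪tp x (⟪ψ, y⟫_ℂ • ψ), v⟫_ℂ := by rw [hQ]
          _ = ⟪⟪ψ, y⟫_ℂ • tp x ψ, v⟫_ℂ := by rw [hsmul]
          _ = starRingEnd ℂ ⟪ψ, y⟫_ℂ * ⟪tp x ψ, v⟫_ℂ := inner_smul_left _ _ _
          _ = starRingEnd ℂ ⟪ψ, y⟫_ℂ * starRingEnd ℂ ⟪v, tp x ψ⟫_ℂ := by
              rw [inner_conj_symm (tp x ψ) v]
          _ = starRingEnd ℂ ⟪ψ, y⟫_ℂ * starRingEnd ℂ ⟪χ, x⟫_ℂ := by rw [hχ]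
          _ = starRingEnd ℂ ⟪ψ, y⟫_ℂ * ⟪x, χ⟫_ℂ := by
              rw [inner_conj_symm x χ]
      calc ⟪v, tp x y⟫_ℂ = starRingEnd ℂ ⟪tp x y, v⟫_ℂ := (inner_conj_symm _ _).symm
        _ = starRingEnd ℂ (starRingEnd ℂ ⟪ψ, y⟫_ℂ * ⟪x, χ⟫_ℂ) := by rw [h1]
        _ = starRingEnd ℂ (starRingEnd ℂ ⟪ψ, y⟫_ℂ) * starRingEnd ℂ ⟪x, χ⟫_ℂ :=
            map_mul _ _ _
        _ = ⟪ψ, y⟫_ℂ * ⟪χ, x⟫_ℂ := by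
            rw [Complex.conj_conj, inner_conj_symm χ x]
        _ = ⟪χ, x⟫_ℂ * ⟪ψ, y⟫_ℂ := by ring
        _ = ⟪tp χ ψ, tp x y⟫_ℂ := (htp _ _ _ _).symm
    apply ext_inner_right ℂ
    intro w
    calc ⟪v, w⟫_ℂ = innerSL ℂ v w := rfl
      _ = innerSL ℂ (tp χ ψ) w := by rw [hfg]
      _ = ⟪tp χ ψ, w⟫_ℂ := rfl
  -- main construction
  have hmain : ∀ kl : Σ k : K, J k, ∃ χ : HS,
      ‖χ‖ = 1 ∧ U (tp (B kl) ψ0) = tp χ (ψvec kl.1) := by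
    rintro ⟨k, l⟩
    set v : HT := U (tp (B ⟨k, l⟩) ψ0) with hvdef
    have hBn : ‖(B ⟨k, l⟩ : HS)‖ = 1 := B.orthonormal.1 _
    have hvn : ‖v‖ = 1 := by
      rw [hvdef, LinearIsometryEquiv.norm_map, hnorm, hBn, hψ0, mul_one]
    have hsum : (∑' l' : J k, ‖⟪(B ⟨k, l'⟩ : HS), (B ⟨k, l⟩ : HS)⟫_ℂ‖ ^ 2) = 1 := by
      have hterm : ∀ l' : J k,
          ‖⟪(B ⟨k, l'⟩ : HS), (B ⟨k, l⟩ : HS)⟫_ℂ‖ ^ 2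
            = if l' = l then (1 : ℝ) else 0 := by
        intro l'
        rcases eq_or_ne l' l with h | h
        · subst h
          rw [inner_self_eq_norm_sq_to_K, hBn]
          norm_num
        · have hne : (⟨k, l'⟩ : Σ k : K, J k) ≠ ⟨k, l⟩ := by
            simp [Sigma.mk.inj_iff, h]
          rw [B.orthonormal.2 hne]
          simp [h]
      rw [tsum_congr hterm, tsum_ite_eq]
    have hQvn : ‖Q k v‖ ^ 2 = 1 := by
      rw [← hprob (B ⟨k, l⟩) hBn k]
      exact hsum
    have horth : ⟪Q k v, v - Q k v⟫_ℂ = 0 := by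
      rw [inner_sub_right]
      have e1 : ⟪Q k v, v⟫_ℂ = ⟪v, Q k v⟫_ℂ := hsa k v v
      have e2 : ⟪Q k v, Q k v⟫_ℂ = ⟪v, Q k v⟫_ℂ := by
        calc ⟪Q k v, Q k v⟫_ℂ = ⟪v, Q k (Q k v)⟫_ℂ := hsa k v (Q k v)
          _ = ⟪v, Q k v⟫_ℂ := by rw [hid]
      rw [e1, e2, sub_self]
    have hpyth : ‖v‖ ^ 2 = ‖Q k v‖ ^ 2 + ‖v - Q k v‖ ^ 2 := by
      have h := norm_add_sq_eq_norm_sq_add_norm_sq_of_inner_eq_zero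
        (Q k v) (v - Q k v) horth
      rw [add_sub_cancel] at h
      simp only [pow_two]
      linarith [h]
    have hzero : v - Q k v = 0 := by
      have h0 : ‖v - Q k v‖ ^ 2 = 0 := by
        rw [hvn, hQvn] at hpyth
        linarith
      have h2 : ‖v - Q k v‖ = 0 := pow_eq_zero_iff two_ne_zero |>.mp h0
      exact norm_eq_zero.mp h2
    have hQv : Q k v = v := (sub_eq_zero.mp hzero).symm
    obtain ⟨χ, hχ⟩ := hkey k v hQv
    have hχn : ‖χ‖ = 1 := by
      have h : ‖v‖ = ‖χ‖ * ‖ψvec k‖ := by rw [hχ, hnorm]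
      rw [hvn, hψvec.1 k, mul_one] at h
      exact h.symm
    exact ⟨χ, hχn, hχ⟩
  choose χ hχn hχeq using hmain
  refine ⟨χ, hχn, ?_, hχeq⟩
  intro k
  rw [orthonormal_iff_ite]
  intro l j
  have hψ0self : ⟪ψ0, ψ0⟫_ℂ = 1 := by
    rw [inner_self_eq_norm_sq_to_K, hψ0]; norm_num
  have h1 : ⟪χ ⟨k, l⟩, χ ⟨k, j⟩⟫_ℂ * ⟪ψvec k, ψvec k⟫_ℂ
      = ⟪(B ⟨k, l⟩ : HS), (B ⟨k, j⟩ : HS)⟫_ℂ := by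
    calc ⟪χ ⟨k, l⟩, χ ⟨k, j⟩⟫_ℂ * ⟪ψvec k, ψvec k⟫_ℂ
        = ⟪tp (χ ⟨k, l⟩) (ψvec k), tp (χ ⟨k, j⟩) (ψvec k)⟫_ℂ := (htp _ _ _ _).symm
      _ = ⟪U (tp (B ⟨k, l⟩) ψ0), U (tp (B ⟨k, j⟩) ψ0)⟫_ℂ := by
          rw [hχeq ⟨k, l⟩, hχeq ⟨k, j⟩]
      _ = ⟪tp (B ⟨k, l⟩) ψ0, tp (B ⟨k, j⟩) ψ0⟫_ℂ := U.inner_map_map _ _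
      _ = ⟪(B ⟨k, l⟩ : HS), (B ⟨k, j⟩ : HS)⟫_ℂ * ⟪ψ0, ψ0⟫_ℂ := htp _ _ _ _
      _ = ⟪(B ⟨k, l⟩ : HS), (B ⟨k, j⟩ : HS)⟫_ℂ := by rw [hψ0self, mul_one]
  rw [hψk k, mul_one] at h1
  rw [h1]
  rw [orthonormal_iff_ite.mp B.orthonormal]
  simp [Sigma.mk.inj_iff]
end

section
/- Under the measurement-coupling assumption, for every unit vector φ = Σ_{k,l} c_{kl} φ_{kl} ∈ H_S and all k, m ∈ K one has ⟨U(φ⊗ψ), (1 ⊗ |ψ_k⟩⟨ψ_m|) U(φ⊗ψ)⟩ = ⟨v_k, v_m⟩, where v_k = Σ_{l∈J_k} c_{kl} χ_{kl} and |ψ_k⟩⟨ψ_m| is the operator on H_A sending x to ⟨ψ_m, x⟩·ψ_k. In particular the probability of pointer value k, namely the matrix element with k = m, equals ‖v_k‖² = Σ_{l} |c_{kl}|². -/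
/- STATEMENT 2.  Under the measurement-coupling assumption, for every unit
vector `φ = Σ c_{kl} φ_{kl}` and all `k, m ∈ K`,
`⟨U(φ⊗ψ), (1 ⊗ |ψ_k⟩⟨ψ_m|) U(φ⊗ψ)⟩ = ⟨v_k, v_m⟩` where
`v_k = Σ_l c_{kl} χ_{kl}`; in particular the diagonal matrix element (k = m),
the probability of pointer value k, equals `‖v_k‖² = Σ_l |c_{kl}|²`.
`HT` plays the role of the completed Hilbert tensor product `H_S ⊗ H_A`;
`R k m` is the operator `1 ⊗ |ψ_k⟩⟨ψ_m|`. -/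

open scoped InnerProductSpace

/-- A sum over a sigma type whose terms vanish off the fiber over `m` is a sum
over that fiber. -/
lemma fiber_hasSum {K : Type*} {J : K → Type*} {M : Type*} [AddCommMonoid M]
    [TopologicalSpace M] (f : (Σ k : K, J k) → M) (m : K)
    (h0 : ∀ kl : Σ k : K, J k, kl.1 ≠ m → f kl = 0) {s : M} :
    HasSum (fun l : J m => f ⟨m, l⟩) s ↔ HasSum f s :=
  Function.Injective.hasSum_iff (a := s) (f := f) (g := Sigma.mk m)
    sigma_mk_injective (fun kl hkl => h0 kl (by
      rintro rfl
      exact hkl ⟨kl.2, rfl⟩))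

theorem pointer_matrix_elements
    {HS HA HT : Type*}
    [NormedAddCommGroup HS] [InnerProductSpace ℂ HS] [CompleteSpace HS]
    [NormedAddCommGroup HA] [InnerProductSpace ℂ HA] [CompleteSpace HA]
    [NormedAddCommGroup HT] [InnerProductSpace ℂ HT] [CompleteSpace HT]
    {K : Type*} {J : K → Type*} [Countable K] [∀ k, Countable (J k)]
    (B : HilbertBasis (Σ k : K, J k) ℂ HS)
    (ψvec : K → HA) (hψvec : Orthonormal ℂ ψvec)
    (ψ0 : HA) (hψ0 : ‖ψ0‖ = 1)
    (tp : HS →ₗ[ℂ] HA →ₗ[ℂ] HT)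
    (htp : ∀ (x x' : HS) (y y' : HA),
      ⟪tp x y, tp x' y'⟫_ℂ = ⟪x, x'⟫_ℂ * ⟪y, y'⟫_ℂ)
    (hdense : Dense ((Submodule.span ℂ
      (Set.range fun p : HS × HA => tp p.1 p.2) : Submodule ℂ HT) : Set HT))
    (U : HT ≃ₗᵢ[ℂ] HT)
    (χ : (Σ k : K, J k) → HS)
    (hχunit : ∀ kl : Σ k : K, J k, ‖χ kl‖ = 1)
    (hχorth : ∀ k : K, Orthonormal ℂ (fun l : J k => χ ⟨k, l⟩))
    -- measurement-coupling assumption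
    (hmc : ∀ kl : Σ k : K, J k, U (tp (B kl) ψ0) = tp (χ kl) (ψvec kl.1))
    -- R k m = 1 ⊗ |ψ_k⟩⟨ψ_m| : x ⊗ y ↦ x ⊗ (⟨ψ_m, y⟩ ψ_k)
    (R : K → K → HT →L[ℂ] HT)
    (hR : ∀ (k m : K) (x : HS) (y : HA),
      R k m (tp x y) = tp x (⟪ψvec m, y⟫_ℂ • ψvec k))
    (φ : HS) (hφ : ‖φ‖ = 1) (c : (Σ k : K, J k) → ℂ)
    (hc : ∀ kl : Σ k : K, J k, c kl = ⟪(B kl : HS), φ⟫_ℂ) :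
    ∃ v : K → HS,
      -- v_k = Σ_{l∈J_k} c_{kl} χ_{kl}
      (∀ k : K, HasSum (fun l : J k => c ⟨k, l⟩ • χ ⟨k, l⟩) (v k)) ∧
      -- ⟨U(φ⊗ψ), (1 ⊗ |ψ_k⟩⟨ψ_m|) U(φ⊗ψ)⟩ = ⟨v_k, v_m⟩
      (∀ k m : K,
        ⟪U (tp φ ψ0), R k m (U (tp φ ψ0))⟫_ℂ = ⟪v k, v m⟫_ℂ) ∧
      -- the probability of pointer value k: diagonal element = ‖v_k‖² = Σ_l |c_{kl}|²
      (∀ k : K,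
        ⟪U (tp φ ψ0), R k k (U (tp φ ψ0))⟫_ℂ = ((‖v k‖ ^ 2 : ℝ) : ℂ) ∧
        ‖v k‖ ^ 2 = ∑' l : J k, ‖c ⟨k, l⟩‖ ^ 2) := by
  classical
  -- the tensor map multiplies norms
  have hnorm : ∀ (x : HS) (y : HA), ‖tp x y‖ = ‖x‖ * ‖y‖ := by
    intro x y
    have h := htp x x y y
    rw [inner_self_eq_norm_sq_to_K, inner_self_eq_norm_sq_to_K,
      inner_self_eq_norm_sq_to_K] at h
    have h' : ‖tp x y‖ ^ 2 = (‖x‖ * ‖y‖) ^ 2 := by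
      rw [mul_pow]
      exact_mod_cast h
    nlinarith [norm_nonneg (tp x y), mul_nonneg (norm_nonneg x) (norm_nonneg y)]
  -- continuous linear map x ↦ tp x y
  let T : HA → (HS →L[ℂ] HT) := fun y =>
    LinearMap.mkContinuous (tp.flip y) ‖y‖ (fun x => by
      rw [show tp.flip y x = tp x y from rfl, hnorm]
      exact le_of_eq (mul_comm _ _))
  have hT : ∀ (x : HS) (y : HA), T y x = tp x y := fun x y => rfl
  have hψ : ∀ i j : K, ⟪ψvec i, ψvec j⟫_ℂ = if i = j then 1 else 0 :=
    fun i j => orthonormal_iff_ite.mp hψvec i j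
  have hχ : ∀ (k : K) (l j : J k),
      ⟪χ ⟨k, l⟩, χ ⟨k, j⟩⟫_ℂ = if l = j then 1 else 0 :=
    fun k l j => orthonormal_iff_ite.mp (hχorth k) l j
  -- φ expansion
  have hc' : ∀ kl : Σ k : K, J k, c kl = B.repr φ kl := fun kl => by
    rw [hc, B.repr_apply_apply]
  have hcsum : HasSum (fun kl => c kl • (B kl : HS)) φ := by
    simpa only [hc'] using B.hasSum_repr φ
  -- expansion of U (tp φ ψ0)
  have hΦ : HasSum (fun kl => c kl • tp (χ kl) (ψvec kl.1)) (U (tp φ ψ0)) := by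
    have h1 := (T ψ0).hasSum hcsum
    have h2 := (U.toLinearIsometry.toContinuousLinearMap).hasSum h1
    have hterm : ∀ kl : Σ k : K, J k,
        U.toLinearIsometry.toContinuousLinearMap (T ψ0 (c kl • B kl))
          = c kl • tp (χ kl) (ψvec kl.1) := by
      intro kl
      show U (tp (c kl • B kl) ψ0) = _
      rw [map_smul, LinearMap.smul_apply, map_smul, hmc]
    have heq : U.toLinearIsometry.toContinuousLinearMap (T ψ0 φ) = U (tp φ ψ0) := rfl
    rw [funext hterm, heq] at h2
    exact h2
  -- summability of squared coefficients
  have hsq : Summable (fun kl : Σ k : K, J k => ‖c kl‖ ^ 2) := by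
    have hmem := lp.memℓp (B.repr φ)
    rw [memℓp_gen_iff (by norm_num)] at hmem
    have : ∀ kl : Σ k : K, J k,
        ‖B.repr φ kl‖ ^ (ENNReal.toReal 2) = ‖c kl‖ ^ 2 := by
      intro kl
      rw [← hc']
      norm_num
    simpa only [this] using hmem
  have hsqk : ∀ k : K, Summable (fun l : J k => ‖c ⟨k, l⟩‖ ^ 2) :=
    fun k => hsq.comp_injective sigma_mk_injective
  -- existence of v k
  have hvex : ∀ k : K, ∃ vk : HS,
      HasSum (fun l : J k => c ⟨k, l⟩ • χ ⟨k, l⟩) vk := by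
    intro k
    have hof := (hχorth k).orthogonalFamily
    have hsble := (hof.summable_iff_norm_sq_summable (fun l => c ⟨k, l⟩)).mpr
      (by simpa using hsqk k)
    obtain ⟨vk, hvk⟩ := hsble
    exact ⟨vk, by simpa [LinearIsometry.toSpanSingleton_apply] using hvk⟩
  choose v hv using hvex
  -- main matrix-element computation
  have hmain : ∀ k m : K,
      ⟪U (tp φ ψ0), R k m (U (tp φ ψ0))⟫_ℂ = ⟪v k, v m⟫_ℂ := by
    intro k m
    -- R k m (U (tp φ ψ0)) = tp (v m) (ψvec k)
    have hRsum := (R k m).hasSum hΦ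
    have hterm : ∀ kl : Σ k : K, J k,
        (R k m) (c kl • tp (χ kl) (ψvec kl.1))
          = (if kl.1 = m then c kl • tp (χ kl) (ψvec k) else 0) := by
      intro kl
      rw [map_smul, hR, hψ m kl.1]
      by_cases h : kl.1 = m
      · simp [h]
      · simp [h, Ne.symm h]
    rw [funext hterm] at hRsum
    have hvsum : HasSum (fun l : J m => c ⟨m, l⟩ • tp (χ ⟨m, l⟩) (ψvec k))
        (tp (v m) (ψvec k)) := by
      have h1 := (T (ψvec k)).hasSum (hv m)
      have : ∀ l : J m, T (ψvec k) (c ⟨m, l⟩ • χ ⟨m, l⟩)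
          = c ⟨m, l⟩ • tp (χ ⟨m, l⟩) (ψvec k) := by
        intro l
        show tp (c ⟨m, l⟩ • χ ⟨m, l⟩) (ψvec k) = _
        rw [map_smul, LinearMap.smul_apply]
      rw [funext this] at h1
      exact h1
    have h2 : HasSum
        (fun kl : Σ k : K, J k => if kl.1 = m then c kl • tp (χ kl) (ψvec k) else 0)
        (tp (v m) (ψvec k)) := by
      refine (fiber_hasSum _ m (fun kl hkl => if_neg hkl)).mp ?_
      simpa using hvsum
    have hReq : R k m (U (tp φ ψ0)) = tp (v m) (ψvec k) := hRsum.unique h2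
    rw [hReq]
    -- inner product computation
    have hin1 := (innerSL ℂ (tp (v m) (ψvec k))).hasSum hΦ
    have hterm2 : ∀ kl : Σ k : K, J k,
        innerSL ℂ (tp (v m) (ψvec k)) (c kl • tp (χ kl) (ψvec kl.1))
          = (if kl.1 = k then c kl • ⟪v m, χ kl⟫_ℂ else 0) := by
      intro kl
      rw [innerSL_apply_apply, inner_smul_right, htp, hψ k kl.1]
      by_cases h : kl.1 = k
      · simp [h]
      · simp [h, Ne.symm h]
    rw [funext hterm2] at hin1
    have hin3 : HasSum (fun l : J k => c ⟨k, l⟩ • ⟪v m, χ ⟨k, l⟩⟫_ℂ)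
        ⟪v m, v k⟫_ℂ := by
      have h1 := (innerSL ℂ (v m)).hasSum (hv k)
      simpa [inner_smul_right, smul_eq_mul] using h1
    have hin2 : HasSum
        (fun kl : Σ k : K, J k => if kl.1 = k then c kl • ⟪v m, χ kl⟫_ℂ else 0)
        ⟪v m, v k⟫_ℂ := by
      refine (fiber_hasSum _ k (fun kl hkl => if_neg hkl)).mp ?_
      simpa using hin3
    have heq : ⟪tp (v m) (ψvec k), U (tp φ ψ0)⟫_ℂ = ⟪v m, v k⟫_ℂ :=
      hin1.unique hin2
    rw [← inner_conj_symm, heq, inner_conj_symm]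
  -- coefficients of v k
  have hcoef : ∀ (k : K) (l : J k), ⟪χ ⟨k, l⟩, v k⟫_ℂ = c ⟨k, l⟩ := by
    intro k l
    have h1 := (innerSL ℂ (χ ⟨k, l⟩)).hasSum (hv k)
    simp only [innerSL_apply_apply] at h1
    have hterm : ∀ l' : J k, ⟪χ ⟨k, l⟩, c ⟨k, l'⟩ • χ ⟨k, l'⟩⟫_ℂ
        = (if l' = l then c ⟨k, l⟩ else 0) := by
      intro l'
      rw [inner_smul_right, hχ k l l']
      by_cases h : l' = l
      · subst h; simp
      · simp [h, Ne.symm h]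
    rw [funext hterm] at h1
    exact h1.unique (hasSum_ite_eq l (c ⟨k, l⟩))
  -- norm computation
  have hnk : ∀ k : K, ‖v k‖ ^ 2 = ∑' l : J k, ‖c ⟨k, l⟩‖ ^ 2 := by
    intro k
    have h1 := (innerSL ℂ (v k)).hasSum (hv k)
    simp only [innerSL_apply_apply] at h1
    have hterm : ∀ l : J k, ⟪v k, c ⟨k, l⟩ • χ ⟨k, l⟩⟫_ℂ
        = ((‖c ⟨k, l⟩‖ ^ 2 : ℝ) : ℂ) := by
      intro l
      rw [inner_smul_right, ← inner_conj_symm, hcoef]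
      rw [mul_comm, RCLike.conj_mul]
      norm_cast
    rw [funext hterm] at h1
    have h2 : ((⟪v k, v k⟫_ℂ : ℂ)) = ((‖v k‖ ^ 2 : ℝ) : ℂ) := by
      rw [inner_self_eq_norm_sq_to_K]
      norm_cast
    rw [h2] at h1
    exact ((Complex.hasSum_ofReal.mp h1).tsum_eq).symm
  refine ⟨v, hv, hmain, fun k => ⟨?_, hnk k⟩⟩
  rw [hmain k k, inner_self_eq_norm_sq_to_K]
  norm_cast
end

section
/- Assume the measurement-coupling assumption and in addition that the end states are fully orthonormal: ⟨χ_{kl}, χ_{mn}⟩ = δ_{km} δ_{ln} for all k, m ∈ K, l ∈ J_k, n ∈ J_m. Then for every unit vector φ = Σ_{k,l} c_{kl} φ_{kl} ∈ H_S and every bounded operator B on H_A: ⟨U(φ⊗ψ), (1 ⊗ B) U(φ⊗ψ)⟩ = Σ_{k∈K} p_k ⟨ψ_k, B ψ_k⟩, where p_k = Σ_{l∈J_k} |c_{kl}|² (so the apparatus statistics are those of the convex combination Σ_k p_k |ψ_k⟩⟨ψ_k|). -/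
/- STATEMENT 3.  If in addition the end states are fully orthonormal,
`⟨χ_{kl}, χ_{mn}⟩ = δ_{km} δ_{ln}`, then for every unit vector
`φ = Σ c_{kl} φ_{kl}` and every bounded operator `Bop` on `H_A`,
`⟨U(φ⊗ψ), (1 ⊗ Bop) U(φ⊗ψ)⟩ = Σ_k p_k ⟨ψ_k, Bop ψ_k⟩` with
`p_k = Σ_l |c_{kl}|²`; i.e. the apparatus statistics are those of
`Σ_k p_k |ψ_k⟩⟨ψ_k|`.  `HT` plays the role of the completed Hilbert
tensor product `H_S ⊗ H_A`; `TB` is the operator `1 ⊗ Bop`. -/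

open scoped InnerProductSpace

theorem apparatus_statistics_of_orthogonal_end_states
    {HS HA HT : Type*}
    [NormedAddCommGroup HS] [InnerProductSpace ℂ HS] [CompleteSpace HS]
    [NormedAddCommGroup HA] [InnerProductSpace ℂ HA] [CompleteSpace HA]
    [NormedAddCommGroup HT] [InnerProductSpace ℂ HT] [CompleteSpace HT]
    {K : Type*} {J : K → Type*} [Countable K] [∀ k, Countable (J k)]
    (B : HilbertBasis (Σ k : K, J k) ℂ HS)
    (ψvec : K → HA) (hψvec : Orthonormal ℂ ψvec)
    (ψ0 : HA) (hψ0 : ‖ψ0‖ = 1)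
    (tp : HS →ₗ[ℂ] HA →ₗ[ℂ] HT)
    (htp : ∀ (x x' : HS) (y y' : HA),
      ⟪tp x y, tp x' y'⟫_ℂ = ⟪x, x'⟫_ℂ * ⟪y, y'⟫_ℂ)
    (hdense : Dense ((Submodule.span ℂ
      (Set.range fun p : HS × HA => tp p.1 p.2) : Submodule ℂ HT) : Set HT))
    (U : HT ≃ₗᵢ[ℂ] HT)
    -- the end states χ_{kl}, fully orthonormal: ⟨χ_{kl}, χ_{mn}⟩ = δ_{km} δ_{ln}
    (χ : (Σ k : K, J k) → HS)
    (hχorth : Orthonormal ℂ χ)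
    -- measurement-coupling assumption
    (hmc : ∀ kl : Σ k : K, J k, U (tp (B kl) ψ0) = tp (χ kl) (ψvec kl.1))
    -- a bounded operator Bop on H_A and TB = 1 ⊗ Bop
    (Bop : HA →L[ℂ] HA) (TB : HT →L[ℂ] HT)
    (hTB : ∀ (x : HS) (y : HA), TB (tp x y) = tp x (Bop y))
    (φ : HS) (hφ : ‖φ‖ = 1) (c : (Σ k : K, J k) → ℂ)
    (hc : ∀ kl : Σ k : K, J k, c kl = ⟪(B kl : HS), φ⟫_ℂ) :
    ⟪U (tp φ ψ0), TB (U (tp φ ψ0))⟫_ℂ =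
      ∑' k : K, ((∑' l : J k, ‖c ⟨k, l⟩‖ ^ 2 : ℝ) : ℂ) * ⟪ψvec k, Bop (ψvec k)⟫_ℂ := by
  classical
  have hψ0self : ⟪ψ0, ψ0⟫_ℂ = 1 := by
    rw [inner_self_eq_norm_sq_to_K, hψ0]; norm_num
  have hnorm : ∀ x : HS, ‖U (tp x ψ0)‖ = ‖x‖ := by
    intro x
    have h1 : ⟪tp x ψ0, tp x ψ0⟫_ℂ = ⟪x, x⟫_ℂ := by
      rw [htp, hψ0self, mul_one]
    have h2 : ‖tp x ψ0‖ ^ 2 = ‖x‖ ^ 2 := by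
      rw [← @inner_self_eq_norm_sq ℂ, ← @inner_self_eq_norm_sq ℂ, h1]
    rw [U.norm_map]
    nlinarith [norm_nonneg (tp x ψ0), norm_nonneg x]
  set V : HS →L[ℂ] HT := LinearMap.mkContinuous
    ((U.toLinearEquiv.toLinearMap).comp (tp.flip ψ0)) 1
    (by intro x
        simp only [LinearMap.coe_comp, Function.comp_apply, LinearMap.flip_apply,
          LinearIsometryEquiv.coe_toLinearEquiv, one_mul]
        exact le_of_eq (hnorm x)) with hV
  have hVapp : ∀ x : HS, V x = U (tp x ψ0) := fun x => rfl
  set w := U (tp φ ψ0) with hw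
  have hW : HasSum (fun i : Σ k, J k => c i • tp (χ i) (ψvec i.1)) w := by
    have h := (B.hasSum_repr φ).mapL V
    have he : (fun i : Σ k, J k => V (B.repr φ i • B i))
        = fun i : Σ k, J k => c i • tp (χ i) (ψvec i.1) := by
      funext i
      rw [map_smul, hVapp, hmc, B.repr_apply_apply, ← hc]
    rwa [he, hVapp] at h
  have hTBw : HasSum (fun i : Σ k, J k => c i • tp (χ i) (Bop (ψvec i.1))) (TB w) := by
    have h := hW.mapL TB
    simpa only [map_smul, hTB] using h
  have key : ∀ j : Σ k, J k,
      ⟪tp (χ j) (Bop (ψvec j.1)), w⟫_ℂ = c j * ⟪Bop (ψvec j.1), ψvec j.1⟫_ℂ := by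
    intro j
    have h1 := hW.mapL (innerSL ℂ (tp (χ j) (Bop (ψvec j.1))))
    have hterm : ∀ i : Σ k, J k,
        ⟪tp (χ j) (Bop (ψvec j.1)), c i • tp (χ i) (ψvec i.1)⟫_ℂ
        = if j = i then c j * ⟪Bop (ψvec j.1), ψvec j.1⟫_ℂ else 0 := by
      intro i
      rw [inner_smul_right, htp, orthonormal_iff_ite.mp hχorth j i]
      by_cases h : j = i
      · subst h; simp [mul_comm]
      · simp [h]
    have h1t : ⟪tp (χ j) (Bop (ψvec j.1)), w⟫_ℂ
        = ∑' i : Σ k, J k, ⟪tp (χ j) (Bop (ψvec j.1)), c i • tp (χ i) (ψvec i.1)⟫_ℂ := by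
      simpa only [innerSL_apply_apply] using h1.tsum_eq.symm
    rw [h1t, tsum_eq_single j (fun i hij => by rw [hterm i, if_neg (Ne.symm hij)]),
      hterm j, if_pos rfl]
  have h3 : HasSum (fun j : Σ k, J k =>
      ((‖c j‖ ^ 2 : ℝ) : ℂ) * ⟪ψvec j.1, Bop (ψvec j.1)⟫_ℂ) ⟪w, TB w⟫_ℂ := by
    have h2 := hTBw.mapL (innerSL ℂ w)
    have he : (fun j : Σ k, J k => (innerSL ℂ w) (c j • tp (χ j) (Bop (ψvec j.1))))
        = fun j : Σ k, J k => ((‖c j‖ ^ 2 : ℝ) : ℂ) * ⟪ψvec j.1, Bop (ψvec j.1)⟫_ℂ := by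
      funext j
      rw [innerSL_apply_apply, inner_smul_right, ← inner_conj_symm, key j, map_mul,
        inner_conj_symm]
      rw [← mul_assoc, Complex.mul_conj']
      norm_cast
    rwa [he] at h2
  rw [← h3.tsum_eq, Summable.tsum_sigma h3.summable]
  congr 1
  funext k
  show (∑' l : J k, ((‖c ⟨k, l⟩‖ ^ 2 : ℝ) : ℂ) * ⟪ψvec k, Bop (ψvec k)⟫_ℂ) = _
  rw [tsum_mul_right, ← Complex.ofReal_tsum]
end

section
/- Fix k ≠ l in ι and α, β ∈ ℝ, and define P_{αkl} = e^{iα}|φ_k⟩⟨φ_l| + e^{−iα}|φ_l⟩⟨φ_k| on H and P'_{βkl} = e^{iβ}|φ'_k⟩⟨φ'_l| + e^{−iβ}|φ'_l⟩⟨φ'_k| on H' (both bounded self-adjoint). Then ⟨P_{αkl}⟩_Φ = ⟨P'_{βkl}⟩_Φ = 0, (Δ_Φ P_{αkl})² = (Δ_Φ P'_{βkl})² = |c_k|² + |c_l|², and ⟨P_{αkl} P'_{βkl}⟩_Φ = e^{i(α+β)}·conj(c_k)·c_l + e^{−i(α+β)}·conj(c_l)·c_k, which is a real number. Consequently, if |c_k|²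 + |c_l|² > 0, then ρ(P_{αkl}, P'_{βkl}, Φ) = (e^{i(α+β)}·conj(c_k)·c_l + e^{−i(α+β)}·conj(c_l)·c_k)/(|c_k|² + |c_l|²). -/
/- STATEMENT 13.  For Φ = Σ_k c_k φ_k⊗φ'_k and the off-diagonal observables
P_{αkl} = e^{iα}|φ_k⟩⟨φ_l| + e^{−iα}|φ_l⟩⟨φ_k| (k ≠ l) one has
⟨P_{αkl}⟩_Φ = ⟨P'_{βkl}⟩_Φ = 0, (Δ_Φ P_{αkl})² = (Δ_Φ P'_{βkl})² = |c_k|²+|c_l|²,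
⟨P_{αkl} P'_{βkl}⟩_Φ = e^{i(α+β)} conj(c_k) c_l + e^{−i(α+β)} conj(c_l) c_k (a real
number); hence ρ(P_{αkl}, P'_{βkl}, Φ) = (that number)/(|c_k|²+|c_l|²) when
|c_k|²+|c_l|² > 0.  `HT` plays the role of the completed Hilbert tensor product
`H ⊗ H'`; `TOp O O'` is the operator `O ⊗ O'`. -/

open scoped InnerProductSpace ComplexConjugate

/-- |u⟩⟨v| : x ↦ ⟨v, x⟩ • u. -/
noncomputable def ketBra {E : Type*} [NormedAddCommGroup E] [InnerProductSpace ℂ E]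
    (u v : E) : E →L[ℂ] E :=
  ((innerSL ℂ) v).smulRight u

/-- P_{αkl} = e^{iα}|u⟩⟨v| + e^{−iα}|v⟩⟨u|. -/
noncomputable def offDiag {E : Type*} [NormedAddCommGroup E] [InnerProductSpace ℂ E]
    (α : ℝ) (u v : E) : E →L[ℂ] E :=
  Complex.exp (α * Complex.I) • ketBra u v + Complex.exp (-(α * Complex.I)) • ketBra v u

/-- Expectation value ⟨A⟩_Φ = ⟨Φ, AΦ⟩ (real part). -/
noncomputable def expec {HT : Type*} [NormedAddCommGroup HT] [InnerProductSpace ℂ HT]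
    (Φ : HT) (A : HT →L[ℂ] HT) : ℝ :=
  (⟪Φ, A Φ⟫_ℂ).re

/-- Variance Δ_Φ A = √(⟨A²⟩_Φ − ⟨A⟩_Φ²). -/
noncomputable def Delta {HT : Type*} [NormedAddCommGroup HT] [InnerProductSpace ℂ HT]
    (Φ : HT) (A : HT →L[ℂ] HT) : ℝ :=
  Real.sqrt (expec Φ (A.comp A) - (expec Φ A) ^ 2)

/-- Normalized correlation ρ of A = O⊗1 and B = 1⊗O', with C = O⊗O'. -/
noncomputable def corr {HT : Type*} [NormedAddCommGroup HT] [InnerProductSpace ℂ HT]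
    (Φ : HT) (A B C : HT →L[ℂ] HT) : ℝ :=
  (expec Φ C - expec Φ A * expec Φ B) / (Delta Φ A * Delta Φ B)

lemma offDiag_apply {E : Type*} [NormedAddCommGroup E] [InnerProductSpace ℂ E]
    (α : ℝ) (u v x : E) :
    offDiag α u v x = (Complex.exp (α * Complex.I) * ⟪v, x⟫_ℂ) • u
      + (Complex.exp (-(α * Complex.I)) * ⟪u, x⟫_ℂ) • v := by
  simp [offDiag, ketBra, ContinuousLinearMap.smulRight_apply, smul_smul]

theorem offdiagonal_correlations_determine_coefficients
    {H H' HT : Type*}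
    [NormedAddCommGroup H] [InnerProductSpace ℂ H] [CompleteSpace H]
    [NormedAddCommGroup H'] [InnerProductSpace ℂ H'] [CompleteSpace H']
    [NormedAddCommGroup HT] [InnerProductSpace ℂ HT] [CompleteSpace HT]
    {ι : Type*} [Countable ι]
    (B : HilbertBasis ι ℂ H) (B' : HilbertBasis ι ℂ H')
    (tp : H →ₗ[ℂ] H' →ₗ[ℂ] HT)
    (htp : ∀ (x x' : H) (y y' : H'),
      ⟪tp x y, tp x' y'⟫_ℂ = ⟪x, x'⟫_ℂ * ⟪y, y'⟫_ℂ)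
    (hdense : Dense ((Submodule.span ℂ
      (Set.range fun p : H × H' => tp p.1 p.2) : Submodule ℂ HT) : Set HT))
    -- TOp O O' = O ⊗ O'
    (TOp : (H →L[ℂ] H) → (H' →L[ℂ] H') → (HT →L[ℂ] HT))
    (hTOp : ∀ (O : H →L[ℂ] H) (O' : H' →L[ℂ] H') (x : H) (y : H'),
      TOp O O' (tp x y) = tp (O x) (O' y))
    (c : ι → ℂ) (hc : HasSum (fun k => ‖c k‖ ^ 2) 1)
    (Φ : HT) (hΦ : HasSum (fun k => c k • tp (B k) (B' k)) Φ)
    (k l : ι) (hkl : k ≠ l) (α β : ℝ) :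
    ⟪Φ, TOp (offDiag α (B k) (B l)) (ContinuousLinearMap.id ℂ H') Φ⟫_ℂ = 0 ∧
    ⟪Φ, TOp (ContinuousLinearMap.id ℂ H) (offDiag β (B' k) (B' l)) Φ⟫_ℂ = 0 ∧
    Delta Φ (TOp (offDiag α (B k) (B l)) (ContinuousLinearMap.id ℂ H')) ^ 2
      = ‖c k‖ ^ 2 + ‖c l‖ ^ 2 ∧
    Delta Φ (TOp (ContinuousLinearMap.id ℂ H) (offDiag β (B' k) (B' l))) ^ 2
      = ‖c k‖ ^ 2 + ‖c l‖ ^ 2 ∧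
    ⟪Φ, TOp (offDiag α (B k) (B l)) (offDiag β (B' k) (B' l)) Φ⟫_ℂ
      = Complex.exp ((α + β) * Complex.I) * conj (c k) * c l
        + Complex.exp (-((α + β) * Complex.I)) * conj (c l) * c k ∧
    (Complex.exp ((α + β) * Complex.I) * conj (c k) * c l
        + Complex.exp (-((α + β) * Complex.I)) * conj (c l) * c k).im = 0 ∧
    (0 < ‖c k‖ ^ 2 + ‖c l‖ ^ 2 →
      corr Φ (TOp (offDiag α (B k) (B l)) (ContinuousLinearMap.id ℂ H'))
             (TOp (ContinuousLinearMap.id ℂ H) (offDiag β (B' k) (B' l)))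
             (TOp (offDiag α (B k) (B l)) (offDiag β (B' k) (B' l)))
        = (Complex.exp ((α + β) * Complex.I) * conj (c k) * c l
            + Complex.exp (-((α + β) * Complex.I)) * conj (c l) * c k).re
          / (‖c k‖ ^ 2 + ‖c l‖ ^ 2)) := by
  
  classical
  have hBo := orthonormal_iff_ite.mp B.orthonormal
  have hB'o := orthonormal_iff_ite.mp B'.orthonormal
  have hcc : ∀ z : ℂ, z * conj z = ((‖z‖ ^ 2 : ℝ) : ℂ) := by
    intro z
    rw [Complex.mul_conj]
    norm_cast
    rw [Complex.normSq_eq_norm_sq]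
  -- inner product of Φ with an elementary tensor
  have hinner : ∀ (x : H) (y : H'),
      HasSum (fun m => conj (c m) * (⟪B m, x⟫_ℂ * ⟪B' m, y⟫_ℂ)) ⟪Φ, tp x y⟫_ℂ := by
    intro x y
    have h1 : HasSum (fun m => ⟪tp x y, c m • tp (B m) (B' m)⟫_ℂ) ⟪tp x y, Φ⟫_ℂ :=
      (innerSL ℂ (tp x y)).hasSum hΦ
    have h2 := h1.star
    rw [show star ⟪tp x y, Φ⟫_ℂ = ⟪Φ, tp x y⟫_ℂ from inner_conj_symm _ _] at h2
    convert h2 using 2 with m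
    rw [inner_smul_right, htp]
    simp only [Complex.star_def, map_mul, inner_conj_symm]
  -- inner product of Φ with basis tensors
  have hC : ∀ i j, ⟪Φ, tp (B i) (B' j)⟫_ℂ = if i = j then conj (c i) else 0 := by
    intro i j
    have h := hinner (B i) (B' j)
    by_cases hij : i = j
    · subst hij
      rw [if_pos rfl]
      refine h.unique ?_
      convert (hasSum_ite_eq i (conj (c i))) using 1
      funext m
      by_cases hm : m = i <;> simp [hm, hBo, hB'o, B.orthonormal.1, B'.orthonormal.1]
    · rw [if_neg hij]
      refine h.unique ?_
      convert hasSum_zero using 1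
      funext m
      by_cases h1 : m = i <;> by_cases h2 : m = j
      · exact absurd (h1.symm.trans h2) hij
      all_goals simp [h1, h2, hij, Ne.symm hij, hBo, hB'o]
  -- action of TOp on Φ
  have hA : ∀ (O : H →L[ℂ] H) (O' : H' →L[ℂ] H'),
      HasSum (fun n => c n • tp (O (B n)) (O' (B' n))) (TOp O O' Φ) := by
    intro O O'
    have := (TOp O O').hasSum hΦ
    simpa [hTOp] using this
  have hval : ∀ (O : H →L[ℂ] H) (O' : H' →L[ℂ] H'),
      HasSum (fun n => c n * ⟪Φ, tp (O (B n)) (O' (B' n))⟫_ℂ) ⟪Φ, TOp O O' Φ⟫_ℂ := by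
    intro O O'
    have := (innerSL ℂ Φ).hasSum (hA O O')
    simpa [inner_smul_right] using this
  have hA2 : ∀ (O : H →L[ℂ] H) (O' : H' →L[ℂ] H'),
      HasSum (fun n => c n • tp (O (O (B n))) (O' (O' (B' n)))) (TOp O O' (TOp O O' Φ)) := by
    intro O O'
    have := (TOp O O').hasSum (hA O O')
    simpa [hTOp] using this
  have hval2 : ∀ (O : H →L[ℂ] H) (O' : H' →L[ℂ] H'),
      HasSum (fun n => c n * ⟪Φ, tp (O (O (B n))) (O' (O' (B' n)))⟫_ℂ)
        ⟪Φ, TOp O O' (TOp O O' Φ)⟫_ℂ := by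
    intro O O'
    have := (innerSL ℂ Φ).hasSum (hA2 O O')
    simpa [inner_smul_right] using this
  -- values of P and Q on the basis
  have hlk : l ≠ k := hkl.symm
  have hPk : offDiag α (B k) (B l) (B k) = Complex.exp (-(α * Complex.I)) • B l := by
    rw [offDiag_apply]
    simp [hBo, hlk, B.orthonormal.1]
  have hPl : offDiag α (B k) (B l) (B l) = Complex.exp (α * Complex.I) • B k := by
    rw [offDiag_apply]
    simp [hBo, hkl, B.orthonormal.1]
  have hPn : ∀ n, k ≠ n → l ≠ n → offDiag α (B k) (B l) (B n) = 0 := by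
    intro n h1 h2
    rw [offDiag_apply]
    simp [hBo, h1, h2]
  have hQk : offDiag β (B' k) (B' l) (B' k) = Complex.exp (-(β * Complex.I)) • B' l := by
    rw [offDiag_apply]
    simp [hB'o, hlk, B'.orthonormal.1]
  have hQl : offDiag β (B' k) (B' l) (B' l) = Complex.exp (β * Complex.I) • B' k := by
    rw [offDiag_apply]
    simp [hB'o, hkl, B'.orthonormal.1]
  have hQn : ∀ n, k ≠ n → l ≠ n → offDiag β (B' k) (B' l) (B' n) = 0 := by
    intro n h1 h2
    rw [offDiag_apply]
    simp [hB'o, h1, h2]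
  have hee : ∀ r : ℝ, Complex.exp (-(r * Complex.I)) * Complex.exp (r * Complex.I) = 1 := by
    intro r
    rw [← Complex.exp_add, neg_add_cancel, Complex.exp_zero]
  -- expectation of P ⊗ 1 is zero
  have key1 : ⟪Φ, TOp (offDiag α (B k) (B l)) (ContinuousLinearMap.id ℂ H') Φ⟫_ℂ = 0 := by
    refine (hval _ _).unique ?_
    convert hasSum_zero using 1
    funext n
    rcases eq_or_ne n k with h | h
    · subst h
      simp [hPk, map_smul, LinearMap.smul_apply, inner_smul_right, hC, hlk]
    · rcases eq_or_ne n l with h' | h'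
      · subst h'
        simp [hPl, map_smul, LinearMap.smul_apply, inner_smul_right, hC, hkl]
      · simp [hPn n h.symm h'.symm]
  -- expectation of 1 ⊗ Q is zero
  have key2 : ⟪Φ, TOp (ContinuousLinearMap.id ℂ H) (offDiag β (B' k) (B' l)) Φ⟫_ℂ = 0 := by
    refine (hval _ _).unique ?_
    convert hasSum_zero using 1
    funext n
    rcases eq_or_ne n k with h | h
    · subst h
      simp [hQk, map_smul, inner_smul_right, hC, hkl]
    · rcases eq_or_ne n l with h' | h'
      · subst h'
        simp [hQl, map_smul, inner_smul_right, hC, hlk]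
      · simp [hQn n h.symm h'.symm]
  -- sum for the squares
  have hsq : HasSum (fun n => if n = k then ((‖c k‖ ^ 2 : ℝ) : ℂ)
        else if n = l then ((‖c l‖ ^ 2 : ℝ) : ℂ) else 0)
      (((‖c k‖ ^ 2 : ℝ) : ℂ) + ((‖c l‖ ^ 2 : ℝ) : ℂ)) := by
    have h1 := hasSum_ite_eq k ((‖c k‖ ^ 2 : ℝ) : ℂ)
    have h2 := hasSum_ite_eq l ((‖c l‖ ^ 2 : ℝ) : ℂ)
    convert h1.add h2 using 1
    funext n
    rcases eq_or_ne n k with h | h <;> rcases eq_or_ne n l with h' | h'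
    · exact absurd (h.symm.trans h') hkl
    all_goals simp [h, h', hkl, hlk]
  have key3 : ⟪Φ, TOp (offDiag α (B k) (B l)) (ContinuousLinearMap.id ℂ H')
        (TOp (offDiag α (B k) (B l)) (ContinuousLinearMap.id ℂ H') Φ)⟫_ℂ
      = ((‖c k‖ ^ 2 : ℝ) : ℂ) + ((‖c l‖ ^ 2 : ℝ) : ℂ) := by
    refine (hval2 _ _).unique ?_
    convert hsq using 1
    funext n
    rcases eq_or_ne n k with h | h
    · subst h
      rw [if_pos rfl]
      rw [ContinuousLinearMap.id_apply, ContinuousLinearMap.id_apply, hPk, map_smul, hPl,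
        smul_smul, hee]
      simp [map_smul, inner_smul_right, hC, hcc, mul_comm]
    · rcases eq_or_ne n l with h' | h'
      · subst h'
        rw [if_neg h, if_pos rfl]
        rw [ContinuousLinearMap.id_apply, ContinuousLinearMap.id_apply, hPl, map_smul, hPk,
          smul_smul]
        rw [show Complex.exp (α * Complex.I) * Complex.exp (-(α * Complex.I)) = 1 by
          rw [mul_comm]; exact hee α]
        simp [map_smul, inner_smul_right, hC, hcc, mul_comm]
      · rw [if_neg h, if_neg h']
        simp [hPn n h.symm h'.symm]
  have key4 : ⟪Φ, TOp (ContinuousLinearMap.id ℂ H) (offDiag β (B' k) (B' l))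
        (TOp (ContinuousLinearMap.id ℂ H) (offDiag β (B' k) (B' l)) Φ)⟫_ℂ
      = ((‖c k‖ ^ 2 : ℝ) : ℂ) + ((‖c l‖ ^ 2 : ℝ) : ℂ) := by
    refine (hval2 _ _).unique ?_
    convert hsq using 1
    funext n
    rcases eq_or_ne n k with h | h
    · subst h
      rw [if_pos rfl]
      rw [ContinuousLinearMap.id_apply, ContinuousLinearMap.id_apply, hQk, map_smul, hQl,
        smul_smul, hee]
      simp [inner_smul_right, hC, hcc, mul_comm]
    · rcases eq_or_ne n l with h' | h'
      · subst h'
        rw [if_neg h, if_pos rfl]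
        rw [ContinuousLinearMap.id_apply, ContinuousLinearMap.id_apply, hQl, map_smul, hQk,
          smul_smul]
        rw [show Complex.exp (β * Complex.I) * Complex.exp (-(β * Complex.I)) = 1 by
          rw [mul_comm]; exact hee β]
        simp [inner_smul_right, hC, hcc, mul_comm]
      · rw [if_neg h, if_neg h']
        simp [hQn n h.symm h'.symm]
  -- the cross term
  have hadd1 : Complex.exp (α * Complex.I) * Complex.exp (β * Complex.I)
      = Complex.exp ((α + β) * Complex.I) := by
    rw [← Complex.exp_add]
    congr 1
    push_cast
    ring
  have hadd2 : Complex.exp (-(α * Complex.I)) * Complex.exp (-(β * Complex.I))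
      = Complex.exp (-((α + β) * Complex.I)) := by
    rw [← Complex.exp_add]
    congr 1
    push_cast
    ring
  have key5 : ⟪Φ, TOp (offDiag α (B k) (B l)) (offDiag β (B' k) (B' l)) Φ⟫_ℂ
      = Complex.exp ((α + β) * Complex.I) * conj (c k) * c l
        + Complex.exp (-((α + β) * Complex.I)) * conj (c l) * c k := by
    refine (hval _ _).unique ?_
    have h1 := hasSum_ite_eq l (Complex.exp ((α + β) * Complex.I) * conj (c k) * c l)
    have h2 := hasSum_ite_eq k (Complex.exp (-((α + β) * Complex.I)) * conj (c l) * c k)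
    have heq : (fun n => c n * ⟪Φ, tp ((offDiag α (B k) (B l)) (B n))
          ((offDiag β (B' k) (B' l)) (B' n))⟫_ℂ)
        = fun n => (if n = l then Complex.exp ((α + β) * Complex.I) * conj (c k) * c l else 0)
          + (if n = k then Complex.exp (-((α + β) * Complex.I)) * conj (c l) * c k else 0) := by
      funext n
      rcases eq_or_ne n k with h | h
      · subst h
        rw [hPk, hQk]
        simp [map_smul, inner_smul_right, hC, hkl]
        linear_combination c n * conj (c l) * hadd2
      · rcases eq_or_ne n l with h' | h'
        · subst h'
          rw [hPl, hQl]
          simp [map_smul, inner_smul_right, hC, h]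
          linear_combination c n * conj (c k) * hadd1
        · rw [if_neg h', if_neg h, add_zero]
          simp [hPn n h.symm h'.symm]
    rw [heq]
    exact h1.add h2
  -- reality of the cross term
  have hconj : Complex.exp (-((α + β) * Complex.I)) * conj (c l) * c k
      = conj (Complex.exp ((α + β) * Complex.I) * conj (c k) * c l) := by
    rw [map_mul, map_mul, Complex.conj_conj, ← Complex.exp_conj]
    rw [show conj ((α + β) * Complex.I) = -((α + β) * Complex.I) by
      simp [Complex.conj_I]]
    ring
  have key6 : (Complex.exp ((α + β) * Complex.I) * conj (c k) * c l
      + Complex.exp (-((α + β) * Complex.I)) * conj (c l) * c k).im = 0 := by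
    rw [hconj, Complex.add_conj]
    simp
  -- expectations and variances
  have e1 : expec Φ (TOp (offDiag α (B k) (B l)) (ContinuousLinearMap.id ℂ H')) = 0 := by
    rw [expec, key1, Complex.zero_re]
  have e2 : expec Φ (TOp (ContinuousLinearMap.id ℂ H) (offDiag β (B' k) (B' l))) = 0 := by
    rw [expec, key2, Complex.zero_re]
  have e3 : expec Φ ((TOp (offDiag α (B k) (B l)) (ContinuousLinearMap.id ℂ H')).comp
      (TOp (offDiag α (B k) (B l)) (ContinuousLinearMap.id ℂ H'))) = ‖c k‖ ^ 2 + ‖c l‖ ^ 2 := by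
    rw [expec, ContinuousLinearMap.comp_apply, key3]
    simp only [Complex.add_re, Complex.ofReal_re]
  have e4 : expec Φ ((TOp (ContinuousLinearMap.id ℂ H) (offDiag β (B' k) (B' l))).comp
      (TOp (ContinuousLinearMap.id ℂ H) (offDiag β (B' k) (B' l)))) = ‖c k‖ ^ 2 + ‖c l‖ ^ 2 := by
    rw [expec, ContinuousLinearMap.comp_apply, key4]
    simp only [Complex.add_re, Complex.ofReal_re]
  have hzero : ‖c k‖ ^ 2 + ‖c l‖ ^ 2 - 0 ^ 2 = ‖c k‖ ^ 2 + ‖c l‖ ^ 2 := by ring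
  have hD1 : Delta Φ (TOp (offDiag α (B k) (B l)) (ContinuousLinearMap.id ℂ H')) ^ 2
      = ‖c k‖ ^ 2 + ‖c l‖ ^ 2 := by
    rw [Delta, e1, e3, hzero, Real.sq_sqrt (by positivity)]
  have hD2 : Delta Φ (TOp (ContinuousLinearMap.id ℂ H) (offDiag β (B' k) (B' l))) ^ 2
      = ‖c k‖ ^ 2 + ‖c l‖ ^ 2 := by
    rw [Delta, e2, e4, hzero, Real.sq_sqrt (by positivity)]
  refine ⟨key1, key2, hD1, hD2, key5, key6, ?_⟩
  intro hpos
  rw [corr, e1, e2]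
  rw [show expec Φ (TOp (offDiag α (B k) (B l)) (offDiag β (B' k) (B' l)))
      = (Complex.exp ((α + β) * Complex.I) * conj (c k) * c l
        + Complex.exp (-((α + β) * Complex.I)) * conj (c l) * c k).re by
    rw [expec, key5]]
  rw [show Delta Φ (TOp (offDiag α (B k) (B l)) (ContinuousLinearMap.id ℂ H'))
        * Delta Φ (TOp (ContinuousLinearMap.id ℂ H) (offDiag β (B' k) (B' l)))
      = ‖c k‖ ^ 2 + ‖c l‖ ^ 2 by
    rw [Delta, Delta, e1, e2, e3, e4, hzero]
    exact Real.mul_self_sqrt (by positivity)]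
  ring
end
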